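/- The Krawtchouk polynomials satisfy the parameter derivative formula ∂/∂p k_n^{(p)}(x, N) = (n − N − 1) k_{n−1}^{(p)}(x, N) for n ≥ 1, where k_n^{(p)}(x, N) = (−1)^n binomial(N, n) p^n ₂F₁(−n, −x; −N; 1/p). -/

import Mathlib

open Finset

/-- Pochhammer symbol `(a)_k = a(a+1)⋯(a+k−1)`. -/
noncomputable def poch (a : ℝ) (k : ℕ) : ℝ := ∏ j ∈ Finset.range k, (a + j)

/-- Krawtchouk polynomial
`k_n^{(p)}(x, N) = (−1)^n C(N,n) pⁿ ∑_{j=0}^n (−n)_j (−x)_j / ((−N)_j j!) · p^{−j}`. -/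
noncomputable def krawtchouk (n : ℕ) (p : ℝ) (x : ℝ) (N : ℕ) : ℝ :=
  (-1 : ℝ) ^ n * (N.choose n) * p ^ n *
    ∑ j ∈ Finset.range (n + 1),
      poch (-(n : ℝ)) j * poch (-x) j / (poch (-(N : ℝ)) j * Nat.factorial j) * (1 / p) ^ j

lemma poch_succ' (a : ℝ) (j : ℕ) : poch a (j + 1) = a * poch (a + 1) j := by
  unfold poch
  rw [Finset.prod_range_succ', mul_comm]
  congr 1
  · norm_num
  · exact Finset.prod_congr rfl fun i _ => by push_cast; ring

lemma poch_shift (n j : ℕ) :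
    poch (-(n : ℝ)) j * ((n : ℝ) - j) = n * poch (-(n : ℝ) + 1) j := by
  have h1 : poch (-(n : ℝ)) (j + 1) = poch (-(n : ℝ)) j * (-(n : ℝ) + j) := by
    unfold poch; rw [Finset.prod_range_succ]
  have h2 := poch_succ' (-(n : ℝ)) j
  linear_combination h1 - h2

theorem krawtchouk_parameter_derivative (N n : ℕ) (hN : 0 < N) (hn : 1 ≤ n) (hnN : n ≤ N)
    (p : ℝ) (hp : p ≠ 0) (x : ℝ) :
    HasDerivAt (fun q : ℝ => krawtchouk n q x N)
      (((n : ℝ) - N - 1) * krawtchouk (n - 1) p x N) p := by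
  have hn1 : (n - 1) + 1 = n := Nat.succ_pred_eq_of_pos hn
  set a : ℕ → ℝ := fun j =>
    (-1 : ℝ) ^ n * (N.choose n) *
      (poch (-(n : ℝ)) j * poch (-x) j / (poch (-(N : ℝ)) j * Nat.factorial j)) with ha
  have hg : HasDerivAt (fun q : ℝ => ∑ j ∈ Finset.range (n + 1), a j * q ^ (n - j))
      (∑ j ∈ Finset.range (n + 1), a j * (((n - j : ℕ) : ℝ) * p ^ (n - j - 1))) p := by
    apply HasDerivAt.fun_sum
    intro j _
    exact (hasDerivAt_pow (n - j) p).const_mul (a j)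
  have heq : (fun q : ℝ => krawtchouk n q x N)
      =ᶠ[nhds p] (fun q : ℝ => ∑ j ∈ Finset.range (n + 1), a j * q ^ (n - j)) := by
    filter_upwards [eventually_ne_nhds hp] with q hq
    simp only [krawtchouk, Finset.mul_sum]
    refine Finset.sum_congr rfl fun j hj => ?_
    have hjn : j ≤ n := Nat.lt_succ_iff.mp (Finset.mem_range.mp hj)
    rw [ha]
    have hq' : q ^ n = q ^ (n - j) * q ^ j := by rw [← pow_add]; congr 1; omega
    rw [hq', one_div, inv_pow]
    have hqq : q ^ j * (q⁻¹) ^ j = 1 := by rw [← mul_pow, mul_inv_cancel₀ hq, one_pow]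
    field_simp
  have hD : (∑ j ∈ Finset.range (n + 1), a j * (((n - j : ℕ) : ℝ) * p ^ (n - j - 1)))
      = ((n : ℝ) - N - 1) * krawtchouk (n - 1) p x N := by
    rw [Finset.sum_range_succ]
    simp only [Nat.sub_self, Nat.cast_zero, zero_mul, mul_zero, add_zero]
    have hsum : ∀ j ∈ Finset.range n,
        a j * (((n - j : ℕ) : ℝ) * p ^ (n - j - 1)) =
        (((n : ℝ) - N - 1) * ((-1 : ℝ) ^ (n - 1) * (N.choose (n - 1)) * p ^ (n - 1))) *
          (poch (-((n - 1 : ℕ) : ℝ)) j * poch (-x) j /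
            (poch (-(N : ℝ)) j * Nat.factorial j) * (1 / p) ^ j) := by
      intro j hj
      have hjn : j < n := Finset.mem_range.mp hj
      have hc1 : ((n - j : ℕ) : ℝ) = (n : ℝ) - j := by
        push_cast [Nat.cast_sub hjn.le]; ring
      have hpoch' : (-((n - 1 : ℕ) : ℝ)) = -(n : ℝ) + 1 := by
        push_cast [Nat.cast_sub hn]; ring
      have hpow : p ^ (n - j - 1) = p ^ ((n - 1) - j) := by congr 1; omega
      have hpw2 : p ^ (n - 1) * (1 / p) ^ j = p ^ ((n - 1) - j) := by
        rw [one_div, inv_pow]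
        have h' : (n - 1) = ((n - 1) - j) + j := by omega
        rw [h', pow_add, mul_assoc, mul_inv_cancel₀ (pow_ne_zero _ hp), mul_one]
        congr 1; omega
      have hch : ((N.choose n : ℝ)) * n = (N.choose (n - 1) : ℝ) * ((N : ℝ) - (n : ℝ) + 1) := by
        have h := Nat.choose_succ_right_eq N (n - 1)
        rw [hn1] at h
        have h2 : ((N.choose n : ℝ)) * n = (N.choose (n - 1) : ℝ) * ((N - (n - 1) : ℕ) : ℝ) := by
          exact_mod_cast congrArg (Nat.cast : ℕ → ℝ) h
        rw [h2]
        congr 1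
        push_cast [Nat.cast_sub (by omega : n - 1 ≤ N), Nat.cast_sub hn]
        ring
      have hsg : (-1 : ℝ) ^ n = (-1) ^ (n - 1) * (-1) := by
        conv_lhs => rw [← hn1, pow_succ]
      have hsh := poch_shift n j
      rw [ha, hc1, hpoch', hpow]
      linear_combination
        ((-1 : ℝ) ^ n * (N.choose n : ℝ) *
            (poch (-x) j / (poch (-(N : ℝ)) j * (Nat.factorial j : ℝ))) * p ^ (n - 1 - j)) * hsh
        + ((N.choose n : ℝ) * (n : ℝ) *
            (poch (-x) j / (poch (-(N : ℝ)) j * (Nat.factorial j : ℝ))) * p ^ (n - 1 - j) *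
            poch (-(n : ℝ) + 1) j) * hsg
        + (-((-1 : ℝ) ^ (n - 1)) *
            (poch (-x) j / (poch (-(N : ℝ)) j * (Nat.factorial j : ℝ))) * p ^ (n - 1 - j) *
            poch (-(n : ℝ) + 1) j) * hch
        + (-(((n : ℝ) - N - 1) * (-1 : ℝ) ^ (n - 1) * (N.choose (n - 1) : ℝ)) *
            (poch (-x) j / (poch (-(N : ℝ)) j * (Nat.factorial j : ℝ))) *
            poch (-(n : ℝ) + 1) j) * hpw2
    rw [Finset.sum_congr rfl hsum, ← Finset.mul_sum]
    unfold krawtchouk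
    rw [hn1]
    ring
  exact hD ▸ hg.congr_of_eventuallyEq heq
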